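/- For any binary linear code C ⊆ F_2^{2n}, the 2-level Construction C* constellation Γ_{C*} = {ψ(c_1) + 2ψ(c_2) + 4z : (c_1, c_2) ∈ C, z ∈ Z^n} is geometrically uniform. -/

import Mathlib

/-- The natural embedding of `F_2^n` into `ℝ^n` (Euclidean space). -/
noncomputable def psiR {n : ℕ} (c : Fin n → ZMod 2) : EuclideanSpace ℝ (Fin n) :=
  WithLp.toLp 2 (fun i => ((c i).val : ℝ))

/-- The natural embedding of `ℤ^n` into `ℝ^n` (Euclidean space). -/
noncomputable def embZ {n : ℕ} (z : Fin n → ℤ) : EuclideanSpace ℝ (Fin n) :=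
  WithLp.toLp 2 (fun i => (z i : ℝ))

/-- The 2-level Construction C* constellation built from a linear main code
`C ⊆ F_2^{2n}`, codewords split into two length-`n` halves `(c₁, c₂)`:
`Γ_{C*} = {ψ(c₁) + 2ψ(c₂) + 4z}`. -/
noncomputable def gammaCStar2 {n : ℕ}
    (C : Submodule (ZMod 2) ((Fin n → ZMod 2) × (Fin n → ZMod 2))) :
    Set (EuclideanSpace ℝ (Fin n)) :=
  {v | ∃ c ∈ C, ∃ z : Fin n → ℤ, v = psiR c.1 + (2 : ℝ) • psiR c.2 + (4 : ℝ) • embZ z}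

lemma key1 : ∀ a b α β γ δ : ZMod 2,
    (4:ℤ) ∣ ((if α + γ = 0 then (1:ℤ) else -1) * ((a.val:ℤ) + 2*(b.val:ℤ))
      + ((γ.val:ℤ) + 2*(δ.val:ℤ)) - (if α + γ = 0 then (1:ℤ) else -1) * ((α.val:ℤ) + 2*(β.val:ℤ))
      - ((((a+α+γ).val : ℤ) + 2*((b+β+δ).val : ℤ)))) := by decide

lemma key2 (a b α β γ δ : ZMod 2) :
    ∃ k : ℤ, (if α + γ = 0 then (1:ℤ) else -1) * ((a.val:ℤ) + 2*(b.val:ℤ))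
      + ((γ.val:ℤ) + 2*(δ.val:ℤ)) - (if α + γ = 0 then (1:ℤ) else -1) * ((α.val:ℤ) + 2*(β.val:ℤ))
      = (((a+α+γ).val : ℤ) + 2*((b+β+δ).val : ℤ)) + 4*k := by
  obtain ⟨k, hk⟩ := key1 a b α β γ δ
  exact ⟨k, by linarith⟩

lemma coordEq {n : ℕ} (a b : Fin n → ZMod 2) (z : Fin n → ℤ) (i : Fin n) :
    (psiR a + (2 : ℝ) • psiR b + (4 : ℝ) • embZ z) i
      = (((a i).val : ℝ)) + 2 * (((b i).val : ℝ)) + 4 * ((z i : ℝ)) := by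
  simp [psiR, embZ, PiLp.add_apply, PiLp.smul_apply, smul_eq_mul]

/-- The sign-flip-and-shift isometry of Euclidean space. -/
noncomputable def signShift {n : ℕ} (ε s : Fin n → ℝ) (hε : ∀ i, ε i = 1 ∨ ε i = -1) :
    EuclideanSpace ℝ (Fin n) ≃ᵢ EuclideanSpace ℝ (Fin n) where
  toFun v := WithLp.toLp 2 (fun i => ε i * v i + s i)
  invFun v := WithLp.toLp 2 (fun i => ε i * (v i - s i))
  left_inv v := by
    ext i
    have h : ε i * ε i = 1 := by rcases hε i with h | h <;> rw [h] <;> norm_num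
    show ε i * (ε i * v i + s i - s i) = v i
    linear_combination (v i) * h
  right_inv v := by
    ext i
    have h : ε i * ε i = 1 := by rcases hε i with h | h <;> rw [h] <;> norm_num
    show ε i * (ε i * (v i - s i)) + s i = v i
    linear_combination (v i - s i) * h
  isometry_toFun := Isometry.of_dist_eq (by
    intro v w
    rw [EuclideanSpace.dist_eq, EuclideanSpace.dist_eq]
    congr 1
    apply Finset.sum_congr rfl
    intro i _
    have h : |ε i| = 1 := by rcases hε i with h | h <;> rw [h] <;> norm_num
    show dist (ε i * v i + s i) (ε i * w i + s i) ^ 2 = dist (v i) (w i) ^ 2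
    simp only [Real.dist_eq]
    have e : ε i * v i + s i - (ε i * w i + s i) = ε i * (v i - w i) := by ring
    rw [e, abs_mul, h, one_mul])

lemma mapsTo_gamma {n : ℕ}
    (C : Submodule (ZMod 2) ((Fin n → ZMod 2) × (Fin n → ZMod 2)))
    (c d : (Fin n → ZMod 2) × (Fin n → ZMod 2)) (hc : c ∈ C) (hd : d ∈ C)
    (z w : Fin n → ℤ) (x y : EuclideanSpace ℝ (Fin n))
    (hx : x = psiR c.1 + (2 : ℝ) • psiR c.2 + (4 : ℝ) • embZ z)
    (hy : y = psiR d.1 + (2 : ℝ) • psiR d.2 + (4 : ℝ) • embZ w)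
    (v : EuclideanSpace ℝ (Fin n)) (hv : v ∈ gammaCStar2 C) :
    WithLp.toLp 2 (fun i => (if c.1 i + d.1 i = 0 then (1:ℝ) else -1) * v i
      + (y i - (if c.1 i + d.1 i = 0 then (1:ℝ) else -1) * x i)) ∈ gammaCStar2 C := by
  obtain ⟨u, hu, z', hv⟩ := hv
  choose k hk using fun i => key2 (u.1 i) (u.2 i) (c.1 i) (c.2 i) (d.1 i) (d.2 i)
  refine ⟨u + c + d, C.add_mem (C.add_mem hu hc) hd,
    (fun i => k i + (if c.1 i + d.1 i = 0 then (1:ℤ) else -1) * (z' i - z i) + w i), ?_⟩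
  ext i
  show (if c.1 i + d.1 i = 0 then (1:ℝ) else -1) * v i
      + (y i - (if c.1 i + d.1 i = 0 then (1:ℝ) else -1) * x i) = _
  have hvi : v i = (((u.1 i).val : ℝ)) + 2 * (((u.2 i).val : ℝ)) + 4 * ((z' i : ℝ)) := by
    rw [hv]; exact coordEq _ _ _ i
  have hxi : x i = (((c.1 i).val : ℝ)) + 2 * (((c.2 i).val : ℝ)) + 4 * ((z i : ℝ)) := by
    rw [hx]; exact coordEq _ _ _ i
  have hyi : y i = (((d.1 i).val : ℝ)) + 2 * (((d.2 i).val : ℝ)) + 4 * ((w i : ℝ)) := by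
    rw [hy]; exact coordEq _ _ _ i
  have hrhs := coordEq (u + c + d).1 (u + c + d).2
    (fun i => k i + (if c.1 i + d.1 i = 0 then (1:ℤ) else -1) * (z' i - z i) + w i) i
  rw [hrhs, hvi, hxi, hyi]
  have h1 : (u + c + d).1 i = u.1 i + c.1 i + d.1 i := rfl
  have h2 : (u + c + d).2 i = u.2 i + c.2 i + d.2 i := rfl
  rw [h1, h2]
  have hki := hk i
  by_cases h : c.1 i + d.1 i = 0 <;> simp only [h, if_true, if_false, if_pos, if_neg] <;>
    [skip; skip] <;>
  · simp only [h, if_true, if_pos, if_neg, reduceIte] at hki ⊢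
    have := congrArg (fun m : ℤ => (m : ℝ)) hki
    push_cast at this ⊢
    linarith

/-- For any binary linear code `C ⊆ F_2^{2n}`, the 2-level Construction C*
constellation is geometrically uniform. -/
theorem constructionCStar_two_level_geometricallyUniform {n : ℕ}
    (C : Submodule (ZMod 2) ((Fin n → ZMod 2) × (Fin n → ZMod 2))) :
    ∀ x ∈ gammaCStar2 C, ∀ y ∈ gammaCStar2 C,
      ∃ T : EuclideanSpace ℝ (Fin n) ≃ᵢ EuclideanSpace ℝ (Fin n),
        T x = y ∧ T '' gammaCStar2 C = gammaCStar2 C := by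
  intro x hx y hy
  obtain ⟨c, hc, z, hxz⟩ := hx
  obtain ⟨d, hd, w, hyw⟩ := hy
  set ε : Fin n → ℝ := fun i => if c.1 i + d.1 i = 0 then (1:ℝ) else -1 with hεdef
  have hε : ∀ i, ε i = 1 ∨ ε i = -1 := by
    intro i; by_cases h : c.1 i + d.1 i = 0 <;> simp [hεdef, h]
  refine ⟨signShift ε (fun i => y i - ε i * x i) hε, ?_, ?_⟩
  · ext i
    show ε i * x i + (y i - ε i * x i) = y i
    ring
  · apply Set.Subset.antisymm
    · rintro _ ⟨v, hv, rfl⟩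
      exact mapsTo_gamma C c d hc hd z w x y hxz hyw v hv
    · intro q hq
      refine ⟨(signShift ε (fun i => y i - ε i * x i) hε).symm q, ?_,
        (signShift ε (fun i => y i - ε i * x i) hε).apply_symm_apply q⟩
      have hmem := mapsTo_gamma C d c hd hc w z y x hyw hxz q hq
      have heq : (signShift ε (fun i => y i - ε i * x i) hε).symm q
          = WithLp.toLp 2 (fun i => (if d.1 i + c.1 i = 0 then (1:ℝ) else -1) * q i
            + (x i - (if d.1 i + c.1 i = 0 then (1:ℝ) else -1) * y i)) := by
        ext i
        show ε i * (q i - (y i - ε i * x i)) = (if d.1 i + c.1 i = 0 then (1:ℝ) else -1) * q i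
            + (x i - (if d.1 i + c.1 i = 0 then (1:ℝ) else -1) * y i)
        have hcomm : d.1 i + c.1 i = c.1 i + d.1 i := add_comm _ _
        rw [hcomm]
        by_cases h : c.1 i + d.1 i = 0 <;> simp only [hεdef, h, if_true, if_false, reduceIte] <;> ring
      rw [heq]
      exact hmem
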